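/- Let F_n(·|δ²) be the distribution function of χ²_n(δ²) and 0 < u < 1/2. Then the (1−u)-quantile satisfies F_n^{-1}(1−u | δ²) ≤ n + δ² + √((4n + 8δ²)·log(1/u)) + 4·log(1/u). -/

import Mathlib

open MeasureTheory ProbabilityTheory Finset

/-- The noncentral chi-squared distribution `χ²_n(δ²)` with `δ² = ∑ i, δ i ^ 2`,
realized as the law of `∑ i, (Z i + δ i)^2` for i.i.d. standard Gaussians `Z i`. -/
noncomputable def noncentralChiSq (n : ℕ) (δ : Fin n → ℝ) : Measure ℝ :=
  Measure.map (fun x => ∑ i, (x i + δ i) ^ 2)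
    (Measure.pi fun _ : Fin n => gaussianReal 0 1)

/-- The distribution function of `χ²_n(δ²)`. -/
noncomputable def noncentralChiSqCDF (n : ℕ) (δ : Fin n → ℝ) (t : ℝ) : ℝ :=
  (noncentralChiSq n δ (Set.Iic t)).toReal

/-- The p-quantile of `χ²_n(δ²)`. -/
noncomputable def noncentralChiSqQuantile (n : ℕ) (δ : Fin n → ℝ) (p : ℝ) : ℝ :=
  sInf {t : ℝ | p ≤ noncentralChiSqCDF n δ t}


open Real Complex
open scoped ENNReal NNReal

lemma my_integral_rexp_quadratic {b : ℝ} (hb : b < 0) (c d : ℝ) :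
    ∫ x : ℝ, rexp (b * x ^ 2 + c * x + d)
      = Real.sqrt (π / (-b)) * rexp (d - c ^ 2 / (4 * b)) := by
  have hb' : ((b : ℂ)).re < 0 := by simpa using hb
  have hbpos : (0:ℝ) < -b := by linarith
  have h := integral_cexp_quadratic hb' (c : ℂ) (d : ℂ)
  have h2 : (0:ℝ) ≤ π / (-b) := by positivity
  have h1 : ((Real.pi : ℂ) / -(b:ℂ)) = ((π / (-b) : ℝ) : ℂ) := by push_cast; ring
  have h3 : ((d:ℂ) - (c:ℂ)^2 / (4 * (b:ℂ))) = ((d - c^2/(4*b) : ℝ) : ℂ) := by push_cast; ring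
  rw [h1, h3, show (1/2:ℂ) = ((1/2:ℝ):ℂ) by norm_num, ← Complex.ofReal_cpow h2,
      ← Complex.ofReal_exp, ← Complex.ofReal_mul] at h
  have hInt := integrable_cexp_quadratic' hb' (c:ℂ) (d:ℂ)
  have hre := integral_re hInt
  simp only [RCLike.re_to_complex] at hre
  rw [h, Complex.ofReal_re] at hre
  rw [Real.sqrt_eq_rpow, ← hre]
  congr 1
  · ext x
    have h4 : ((b:ℂ) * (x:ℂ) ^ 2 + (c:ℂ) * (x:ℂ) + (d:ℂ)) = ((b*x^2+c*x+d : ℝ) : ℂ) := by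
      push_cast; ring
    rw [h4, Complex.exp_ofReal_re]

lemma my_integrable_rexp_quadratic {b : ℝ} (hb : b < 0) (c d : ℝ) :
    Integrable (fun x : ℝ => rexp (b * x ^ 2 + c * x + d)) := by
  have hb' : ((b : ℂ)).re < 0 := by simpa using hb
  have hInt := (integrable_cexp_quadratic' hb' (c:ℂ) (d:ℂ)).re
  refine hInt.congr (Filter.Eventually.of_forall fun x => ?_)
  simp only [RCLike.re_to_complex]
  have h4 : ((b:ℂ) * (x:ℂ) ^ 2 + (c:ℂ) * (x:ℂ) + (d:ℂ)) = ((b*x^2+c*x+d : ℝ) : ℂ) := by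
    push_cast; ring
  rw [h4, Complex.exp_ofReal_re]

lemma gauss_pdf_smul (g : ℝ → ℝ) :
    ∫ z, g z ∂(gaussianReal 0 1)
      = ∫ z, gaussianPDFReal 0 1 z * g z := by
  rw [gaussianReal_of_var_ne_zero 0 one_ne_zero]
  have h : (gaussianPDF 0 1) = fun x => ((Real.toNNReal (gaussianPDFReal 0 1 x) : ℝ≥0) : ℝ≥0∞) := rfl
  rw [h, integral_withDensity_eq_integral_smul
    ((measurable_gaussianPDFReal 0 1).real_toNNReal)]
  congr 1; ext x
  rw [NNReal.smul_def, Real.coe_toNNReal _ (gaussianPDFReal_nonneg 0 1 x), smul_eq_mul]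

lemma gauss_integrable_iff (g : ℝ → ℝ) :
    Integrable g (gaussianReal 0 1)
      ↔ Integrable (fun z => gaussianPDFReal 0 1 z * g z) := by
  rw [gaussianReal_of_var_ne_zero 0 one_ne_zero]
  have h : (gaussianPDF 0 1) = fun x => ((Real.toNNReal (gaussianPDFReal 0 1 x) : ℝ≥0) : ℝ≥0∞) := rfl
  rw [h, integrable_withDensity_iff_integrable_smul
    ((measurable_gaussianPDFReal 0 1).real_toNNReal)]
  constructor <;> intro hh <;> refine hh.congr (Filter.Eventually.of_forall fun x => ?_) <;>
    simp only [NNReal.smul_def, Real.coe_toNNReal _ (gaussianPDFReal_nonneg 0 1 x), smul_eq_mul]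

lemma pdf_mul_exp (t δ : ℝ) (z : ℝ) :
    gaussianPDFReal 0 1 z * rexp (t * (z + δ)^2)
      = (Real.sqrt (2*π))⁻¹ * rexp ((t - 1/2) * z^2 + (2*t*δ)*z + t*δ^2) := by
  simp only [gaussianPDFReal, NNReal.coe_one, mul_one, sub_zero]
  rw [mul_assoc, ← Real.exp_add]
  congr 2
  ring

lemma gauss_mgf {t : ℝ} (ht : t < 1/2) (δ : ℝ) :
    ∫ z, rexp (t * (z + δ)^2) ∂(gaussianReal 0 1)
      = (Real.sqrt (1 - 2*t))⁻¹ * rexp (t * δ^2 / (1 - 2*t)) := by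
  have hb : t - 1/2 < 0 := by linarith
  have h12 : (0:ℝ) < 1 - 2*t := by linarith
  rw [gauss_pdf_smul]
  simp_rw [pdf_mul_exp t δ]
  rw [integral_const_mul, my_integral_rexp_quadratic hb]
  have hne : t - 1/2 ≠ 0 := by linarith
  have hne2 : 1 - 2*t ≠ 0 := by linarith
  have hne3 : (-4:ℝ) + t * 8 ≠ 0 := fun h => hne2 (by linarith)
  have e1 : t*δ^2 - (2*t*δ)^2/(4*(t - 1/2)) = t * δ^2 / (1 - 2*t) := by
    rw [sub_eq_iff_eq_add, div_add_div _ _ hne2 (by intro h; apply hne2; linarith : 4*(t-1/2) ≠ 0),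
      eq_div_iff (by intro h; exact hne2 (by nlinarith) : (1-2*t)*(4*(t-1/2)) ≠ 0)]
    ring
  rw [e1]
  have e2 : π / -(t - 1/2) = 2*π / (1 - 2*t) := by
    rw [div_eq_div_iff] <;> [ring; linarith; linarith]
  rw [e2, Real.sqrt_div' ]
  · rw [← mul_assoc]
    congr 1
    field_simp
  · positivity

lemma gauss_mgf_integrable {t : ℝ} (ht : t < 1/2) (δ : ℝ) :
    Integrable (fun z => rexp (t * (z + δ)^2)) (gaussianReal 0 1) := by
  rw [gauss_integrable_iff]
  have hb : t - 1/2 < 0 := by linarith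
  refine ((my_integrable_rexp_quadratic hb (2*t*δ) (t*δ^2)).const_mul ((Real.sqrt (2*π))⁻¹)).congr
    (Filter.Eventually.of_forall fun z => ?_)
  simp only [pdf_mul_exp t δ]

lemma my_integrable_pi_prod {n : ℕ} (μ : Measure ℝ) [SigmaFinite μ] {f : Fin n → ℝ → ℝ}
    (hf : ∀ i, Integrable (f i) μ) :
    Integrable (fun x : Fin n → ℝ => ∏ i, f i (x i)) (Measure.pi fun _ => μ) := by
  induction n with
  | zero =>
      simp only [Finset.univ_eq_empty, Finset.prod_empty, integrable_const_iff, one_ne_zero,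
        Measure.pi_empty_univ, ENNReal.one_lt_top, or_true, false_or]
      exact ⟨by simp [Measure.pi_empty_univ]⟩
  | succ n n_ih =>
      have := ((measurePreserving_piFinSuccAbove (fun _ : Fin (n+1) => μ) 0).symm)
      rw [← this.integrable_comp_emb (MeasurableEquiv.measurableEmbedding _)]
      simp_rw [MeasurableEquiv.piFinSuccAbove_symm_apply, Fin.insertNthEquiv,
        Fin.prod_univ_succ, Fin.insertNth_zero]
      simp only [Fin.zero_succAbove, Function.comp_def, Fin.cons_zero, Fin.cons_succ,
        Equiv.coe_fn_mk]
      have h2 : Integrable (fun (x : Fin n → ℝ) => ∏ j, f (Fin.succ j) (x j))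
          (Measure.pi fun _ => μ) := n_ih (fun i => hf _)
      exact Integrable.mul_prod (hf 0) h2

lemma my_integral_pi_prod {n : ℕ} (μ : Measure ℝ) [SigmaFinite μ] (f : Fin n → ℝ → ℝ) :
    ∫ x : Fin n → ℝ, ∏ i, f i (x i) ∂(Measure.pi fun _ => μ) = ∏ i, ∫ x, f i x ∂μ := by
  induction n with
  | zero =>
      simp only [Finset.univ_eq_empty, Finset.prod_empty, integral_const,
        Measure.pi_empty_univ, ENNReal.toReal_one, smul_eq_mul, mul_one, one_smul]
      simp [Measure.real, Measure.pi_empty_univ]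
  | succ n n_ih =>
      calc
        _ = ∫ x : ℝ × (Fin n → ℝ),
            f 0 x.1 * ∏ i : Fin n, f (Fin.succ i) (x.2 i)
              ∂(μ.prod (Measure.pi fun _ => μ)) := by
          rw [← ((measurePreserving_piFinSuccAbove
            (fun _ : Fin (n+1) => μ) 0).symm).integral_comp']
          congr 1
          ext x
          simp only [MeasurableEquiv.piFinSuccAbove_symm_apply, Fin.insertNthEquiv,
            Fin.insertNth_zero, Equiv.coe_fn_mk, Fin.zero_succAbove]
          rw [Fin.prod_univ_succ]
          simp [Fin.cons_zero, Fin.cons_succ]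
        _ = (∫ x, f 0 x ∂μ) * ∏ i : Fin n, ∫ x, f (Fin.succ i) x ∂μ := by
          rw [← n_ih, ← integral_prod_mul]
        _ = ∏ i, ∫ x, f i x ∂μ := by rw [Fin.prod_univ_succ]

lemma measurable_sumsq (n : ℕ) (δ : Fin n → ℝ) :
    Measurable (fun x : Fin n → ℝ => ∑ i, (x i + δ i) ^ 2) := by
  exact Finset.measurable_sum _ fun i _ => ((measurable_pi_apply i).add_const _).pow_const 2

instance (n : ℕ) (δ : Fin n → ℝ) : IsProbabilityMeasure (noncentralChiSq n δ) :=
  Measure.isProbabilityMeasure_map (measurable_sumsq n δ).aemeasurable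

lemma chisq_mgf (n : ℕ) (δ : Fin n → ℝ) {t : ℝ} (ht : t < 1/2) :
    ∫ x, rexp (t * x) ∂(noncentralChiSq n δ)
      = ∏ i, ((Real.sqrt (1 - 2*t))⁻¹ * rexp (t * (δ i)^2 / (1 - 2*t))) := by
  rw [noncentralChiSq, integral_map (measurable_sumsq n δ).aemeasurable
    (Continuous.aestronglyMeasurable (by continuity))]
  have h1 : (fun x : Fin n → ℝ => rexp (t * ∑ i, (x i + δ i)^2))
      = fun x : Fin n → ℝ => ∏ i, rexp (t * (x i + δ i)^2) := by
    ext x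
    rw [Finset.mul_sum, Real.exp_sum]
  rw [h1, my_integral_pi_prod (gaussianReal 0 1) (fun i z => rexp (t * (z + δ i)^2))]
  exact Finset.prod_congr rfl fun i _ => gauss_mgf ht (δ i)

lemma chisq_exp_integrable (n : ℕ) (δ : Fin n → ℝ) {t : ℝ} (ht : t < 1/2) :
    Integrable (fun x => rexp (t * x)) (noncentralChiSq n δ) := by
  rw [noncentralChiSq, integrable_map_measure
    (Continuous.aestronglyMeasurable (by continuity)) (measurable_sumsq n δ).aemeasurable]
  have h1 : ((fun x => rexp (t * x)) ∘ (fun x : Fin n → ℝ => ∑ i, (x i + δ i)^2))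
      = fun x : Fin n → ℝ => ∏ i, rexp (t * (x i + δ i)^2) := by
    ext x
    simp only [Function.comp_def]
    rw [Finset.mul_sum, Real.exp_sum]
  rw [h1]
  exact my_integrable_pi_prod _ fun i => gauss_mgf_integrable ht (δ i)

lemma chisq_chernoff (n : ℕ) (δ : Fin n → ℝ) {t a : ℝ} (ht0 : 0 ≤ t) (ht : t < 1/2) :
    ((noncentralChiSq n δ) (Set.Ici a)).toReal
      ≤ rexp (-(t * a)) * ∏ i, ((Real.sqrt (1 - 2*t))⁻¹ * rexp (t * (δ i)^2 / (1 - 2*t))) := by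
  set μ := noncentralChiSq n δ with hμ
  have hint := chisq_exp_integrable n δ ht
  have hm := mul_meas_ge_le_integral_of_nonneg
    (Filter.Eventually.of_forall fun x => (Real.exp_pos (t*x)).le) hint (rexp (t*a))
  have hsub : Set.Ici a ⊆ {x : ℝ | rexp (t*a) ≤ rexp (t*x)} := fun x hx => by
    simp only [Set.mem_setOf_eq, Real.exp_le_exp]
    exact mul_le_mul_of_nonneg_left hx ht0
  have hmono : (μ (Set.Ici a)).toReal ≤ (μ {x : ℝ | rexp (t*a) ≤ rexp (t*x)}).toReal :=
    ENNReal.toReal_mono (measure_ne_top μ _) (measure_mono hsub)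
  rw [← chisq_mgf n δ ht, ← hμ]
  rw [Real.exp_neg, ← inv_mul_le_iff₀ (by positivity), inv_inv]
  calc rexp (t*a) * (μ (Set.Ici a)).toReal
      ≤ rexp (t*a) * (μ {x : ℝ | rexp (t*a) ≤ rexp (t*x)}).toReal := by
        exact mul_le_mul_of_nonneg_left hmono (Real.exp_pos _).le
    _ ≤ ∫ x, rexp (t * x) ∂μ := hm

lemma quad_le_exp {z : ℝ} (hz : 0 ≤ z) : 1 + z + z^2/2 ≤ rexp z := by
  have h := Real.sum_le_exp_of_nonneg hz 3
  simp only [Finset.sum_range_succ, Finset.sum_range_zero] at h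
  norm_num at h
  linarith

lemma neg_log_le {x : ℝ} (h0 : 0 ≤ x) (h1 : x < 1) :
    -Real.log (1-x) ≤ x*(2-x)/(2*(1-x)) := by
  have h1x : (0:ℝ) < 1 - x := by linarith
  set z := x*(2-x)/(2*(1-x)) with hzdef
  have hz0 : 0 ≤ z := by
    apply div_nonneg
    · nlinarith
    · linarith
  have hzmul : 2*(1-x)*z = x*(2-x) := by
    rw [hzdef]; field_simp
  have hpoly : 1 ≤ (1-x) * (1 + z + z^2/2) := by
    nlinarith [sq_nonneg x, sq_nonneg (x*x), sq_nonneg z]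
  have key : (1-x)⁻¹ ≤ rexp z := by
    refine le_trans ?_ (quad_le_exp hz0)
    rw [inv_eq_one_div, div_le_iff₀ h1x]
    nlinarith
  calc -Real.log (1-x) = Real.log (1-x)⁻¹ := by rw [Real.log_inv]
    _ ≤ z := by
        rw [Real.log_le_iff_le_exp (by positivity)]
        exact key

lemma final_ineq (nr δsq L S : ℝ) (hn : 1 ≤ nr) (hδsq : 0 ≤ δsq) (hL : 0 < L)
    (hS0 : 0 ≤ S) (hS2 : S^2 = (4*nr+8*δsq)*L) :
    -(((S+4*L)/(2*((S+4*L)+(nr+2*δsq)))) * (nr+δsq+(S+4*L)))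
      + nr*((((S+4*L)/(2*((S+4*L)+(nr+2*δsq)))) * (1-((S+4*L)/(2*((S+4*L)+(nr+2*δsq)))))) / (1-2*((S+4*L)/(2*((S+4*L)+(nr+2*δsq))))))
      + (((S+4*L)/(2*((S+4*L)+(nr+2*δsq)))) * δsq) / (1-2*((S+4*L)/(2*((S+4*L)+(nr+2*δsq)))))
      ≤ -L := by
  set v := nr + 2*δsq with hvdef
  set s := S + 4*L with hsdef
  set t := s/(2*(s+v)) with htdef
  have hv : 0 < v := by simp only [hvdef]; linarith
  have hs : 0 < s := by simp only [hsdef]; linarith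
  have hsv : 0 < s + v := by linarith
  have h12 : 1 - 2*t = v/(s+v) := by
    rw [htdef]
    field_simp
    ring
  have h12pos : 0 < 1 - 2*t := by rw [h12]; positivity
  have hident : -(t * (nr+δsq+s)) + nr*((t*(1-t))/(1-2*t)) + (t*δsq)/(1-2*t)
      = -(s^2/(4*(s+v))) := by
    rw [h12, htdef]
    field_simp
    ring
  rw [hident, neg_le_neg_iff, le_div_iff₀ (by positivity)]
  have h4vL : 4*v*L = S^2 := by rw [hS2, hvdef]; ring
  nlinarith [mul_nonneg hL.le hS0]

theorem stmt_8 (n : ℕ) (hn : 1 ≤ n) (δ : Fin n → ℝ) (δsq : ℝ)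
    (hδ : δsq = ∑ i, δ i ^ 2) (u : ℝ) (hu0 : 0 < u) (hu : u < 1 / 2) :
    noncentralChiSqQuantile n δ (1 - u)
      ≤ n + δsq + Real.sqrt ((4 * n + 8 * δsq) * Real.log u⁻¹)
          + 4 * Real.log u⁻¹ := by
  have hδsq0 : 0 ≤ δsq := hδ ▸ Finset.sum_nonneg fun i _ => sq_nonneg _
  have hn1 : (1:ℝ) ≤ (n:ℝ) := by exact_mod_cast hn
  set L := Real.log u⁻¹ with hLdef
  have h1u : 1 < u⁻¹ := by
    rw [lt_inv_comm₀ one_pos hu0]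
    linarith
  have hL : 0 < L := Real.log_pos h1u
  set S := Real.sqrt ((4 * (n:ℝ) + 8 * δsq) * L) with hSdef
  have hS0 : 0 ≤ S := Real.sqrt_nonneg _
  have hS2 : S^2 = (4 * (n:ℝ) + 8 * δsq) * L := Real.sq_sqrt (by positivity)
  set v := (n:ℝ) + 2*δsq with hvdef
  set s' := S + 4*L with hsdef
  set t := s'/(2*(s'+v)) with htdef
  have hv : 0 < v := by rw [hvdef]; linarith
  have hs' : 0 < s' := by rw [hsdef]; linarith
  have hsv : 0 < s' + v := by linarith
  have ht0 : 0 ≤ t := by positivity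
  have ht : t < 1/2 := by
    rw [htdef, div_lt_iff₀ (by positivity)]
    linarith
  have h12 : 1 - 2*t = v/(s'+v) := by
    rw [htdef]
    field_simp
    ring
  have h12pos : 0 < 1 - 2*t := by rw [h12]; positivity
  set a := (n:ℝ) + δsq + S + 4*L with hadef
  set μ' := noncentralChiSq n δ with hμdef
  -- Chernoff bound
  have hcher := chisq_chernoff n δ (a := a) ht0 ht
  have hprod : ∏ i, ((Real.sqrt (1 - 2*t))⁻¹ * rexp (t * (δ i)^2 / (1 - 2*t)))
      = ((Real.sqrt (1 - 2*t))⁻¹)^n * rexp ((t*δsq)/(1-2*t)) := by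
    rw [Finset.prod_mul_distrib, Finset.prod_const, Finset.card_univ, Fintype.card_fin,
      ← Real.exp_sum]
    congr 1
    rw [hδ, Finset.mul_sum, Finset.sum_div]
  have hpow : ((Real.sqrt (1 - 2*t))⁻¹)^n = rexp (-((n:ℝ) * (Real.log (1-2*t)/2))) := by
    rw [Real.sqrt_eq_rpow, Real.rpow_def_of_pos h12pos, ← Real.exp_neg, ← Real.exp_nat_mul]
    congr 1
    ring
  have hlog := neg_log_le (x := 2*t) (by linarith) (by linarith)
  have hstep : -((n:ℝ) * (Real.log (1-2*t)/2)) ≤ (n:ℝ) * ((t*(1-t))/(1-2*t)) := by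
    have heq : (2*t*(2-2*t)/(2*(1-2*t)))/2 = (t*(1-t))/(1-2*t) := by
      field_simp
    have h2 : -(Real.log (1-2*t))/2 ≤ (t*(1-t))/(1-2*t) := by
      rw [← heq]
      linarith
    calc -((n:ℝ) * (Real.log (1-2*t)/2)) = (n:ℝ) * (-(Real.log (1-2*t))/2) := by ring
      _ ≤ (n:ℝ) * ((t*(1-t))/(1-2*t)) := by
          apply mul_le_mul_of_nonneg_left h2 (by positivity)
  have hfin := final_ineq (n:ℝ) δsq L S hn1 hδsq0 hL hS0 hS2
  have hchain : rexp (-(t*a)) * ∏ i, ((Real.sqrt (1 - 2*t))⁻¹ * rexp (t * (δ i)^2 / (1 - 2*t)))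
      ≤ u := by
    rw [hprod, hpow, ← Real.exp_add, ← Real.exp_add, ← Real.exp_log hu0]
    apply Real.exp_le_exp.mpr
    have hlogu : Real.log u = -L := by rw [hLdef, Real.log_inv]; ring
    rw [hlogu]
    have ha : t*a = t*((n:ℝ)+δsq+(S+4*L)) := by rw [hadef]; ring
    rw [← hsdef, ← hvdef, ← htdef] at hfin
    linarith [hfin, hstep, ha]
  have hIci : (μ' (Set.Ici a)).toReal ≤ u := le_trans hcher hchain
  -- CDF lower bound
  have hcdf : 1 - u ≤ noncentralChiSqCDF n δ a := by
    have hadd : (μ' (Set.Iic a)).toReal + (μ' (Set.Ioi a)).toReal = 1 := by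
      have hh := measure_add_measure_compl (μ := μ') (measurableSet_Iic (a := a))
      rw [Set.compl_Iic] at hh
      have h3 := congrArg ENNReal.toReal hh
      rwa [ENNReal.toReal_add (measure_ne_top _ _) (measure_ne_top _ _), measure_univ,
        ENNReal.toReal_one] at h3
    have hmono : (μ' (Set.Ioi a)).toReal ≤ (μ' (Set.Ici a)).toReal :=
      ENNReal.toReal_mono (measure_ne_top _ _) (measure_mono Set.Ioi_subset_Ici_self)
    show 1 - u ≤ (noncentralChiSq n δ (Set.Iic a)).toReal
    rw [← hμdef]
    linarith
  -- quantile bound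
  have hbdd : BddBelow {x : ℝ | 1 - u ≤ noncentralChiSqCDF n δ x} := by
    refine ⟨0, fun x hx => ?_⟩
    by_contra hx0
    push_neg at hx0
    have hzero : noncentralChiSqCDF n δ x = 0 := by
      show (noncentralChiSq n δ (Set.Iic x)).toReal = 0
      rw [noncentralChiSq, Measure.map_apply (measurable_sumsq n δ) measurableSet_Iic]
      have hemp : (fun y : Fin n → ℝ => ∑ i, (y i + δ i)^2) ⁻¹' (Set.Iic x) = ∅ := by
        ext y
        simp only [Set.mem_preimage, Set.mem_Iic, Set.mem_empty_iff_false, iff_false, not_le]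
        calc x < 0 := hx0
          _ ≤ ∑ i, (y i + δ i)^2 := Finset.sum_nonneg fun i _ => sq_nonneg _
      rw [hemp]
      simp
    rw [Set.mem_setOf_eq, hzero] at hx
    linarith
  exact csInf_le hbdd hcdf
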